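/- arXiv:2412.18692 — 2 statements merged into one kernel-verified Lean document; each statement's English description precedes it below -/
import Mathlib

section
/- Let p be prime and A an n×n subring matrix of determinant a power of p such that all diagonal entries except the last are positive powers of p (an irreducible subring matrix). Then every 2×2 minor of A is divisible by p, and consequently the cokernel Z^n/col(A) has rank exactly n-1; i.e., every irreducible subring of Z^n has corank n-1. -/
def colSpan {n : ℕ} (A : Matrix (Fin n) (Fin n) ℤ) : AddSubgroup (Fin n → ℤ) :=
  AddSubgroup.closure (Set.range fun j => fun i => A i j)

def IsSubringOf {n : ℕ} (R : AddSubgroup (Fin n → ℤ)) : Prop :=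
  (fun _ => (1 : ℤ)) ∈ R ∧ ∀ u v : Fin n → ℤ, u ∈ R → v ∈ R → u * v ∈ R

def IsHNF {n : ℕ} (A : Matrix (Fin n) (Fin n) ℤ) : Prop :=
  (∀ i j : Fin n, (j : ℕ) < (i : ℕ) → A i j = 0) ∧
  (∀ i j : Fin n, (i : ℕ) < (j : ℕ) → 0 ≤ A i j ∧ A i j < A i i)

def IsSubringMatrix {n : ℕ} (A : Matrix (Fin n) (Fin n) ℤ) : Prop :=
  IsHNF A ∧ A.det ≠ 0 ∧ IsSubringOf (colSpan A)

def GenLE {n : ℕ} (R : AddSubgroup (Fin n → ℤ)) (k : ℕ) : Prop :=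
  ∃ S : Finset ((Fin n → ℤ) ⧸ R), S.card ≤ k ∧
    AddSubgroup.closure (S : Set ((Fin n → ℤ) ⧸ R)) = ⊤

def RankGe {n : ℕ} (R : AddSubgroup (Fin n → ℤ)) (k : ℕ) : Prop :=
  ∀ S : Finset ((Fin n → ℤ) ⧸ R),
    AddSubgroup.closure (S : Set ((Fin n → ℤ) ⧸ R)) = ⊤ → k ≤ S.card

def RankEq {n : ℕ} (R : AddSubgroup (Fin n → ℤ)) (k : ℕ) : Prop :=
  GenLE R k ∧ RankGe R k
theorem mem_colSpan_iff {n : ℕ} (A : Matrix (Fin n) (Fin n) ℤ) (v : Fin n → ℤ) :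
    v ∈ colSpan A ↔ ∃ x, A.mulVec x = v := by
  constructor
  · intro hv
    refine AddSubgroup.closure_induction (p := fun w _ => ∃ x, A.mulVec x = w) ?_ ?_ ?_ ?_ hv
    · rintro _ ⟨j, rfl⟩
      exact ⟨Pi.single j 1, by ext i; simp [Matrix.mulVec, dotProduct, Pi.single_apply]⟩
    · exact ⟨0, by simp⟩
    · rintro a b _ _ ⟨x, rfl⟩ ⟨y, rfl⟩
      exact ⟨x + y, by simp [Matrix.mulVec_add]⟩
    · rintro a _ ⟨x, rfl⟩
      exact ⟨-x, by simp [Matrix.mulVec_neg]⟩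
  · rintro ⟨x, rfl⟩
    have : A.mulVec x = Finset.univ.sum (fun j => x j • (fun i => A i j)) := by
      ext i
      simp [Matrix.mulVec, dotProduct, mul_comm]
    rw [this]
    exact AddSubgroup.sum_mem _ fun j _ =>
      AddSubgroup.zsmul_mem _ (AddSubgroup.subset_closure (Set.mem_range_self j)) _

theorem indicator_zero {n : ℕ} (A : Matrix (Fin (n + 1)) (Fin (n + 1)) ℤ)
    (htri : ∀ i j : Fin (n + 1), (j : ℕ) < (i : ℕ) → A i j = 0)
    (p : ℕ) (hp : 2 ≤ p)
    (e : Fin n → ℕ) (he : ∀ i, 1 ≤ e i)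
    (hdiag : ∀ i : Fin n, A i.castSucc i.castSucc = (p : ℤ) ^ e i)
    (hlast : A (Fin.last n) (Fin.last n) = 1)
    (x v : Fin (n + 1) → ℤ) (hx : A.mulVec x = v)
    (hv01 : ∀ i, v i = 0 ∨ v i = 1) (hvlast : v (Fin.last n) = 0) :
    v = 0 := by
  have key : ∀ j k : Fin (n + 1), j ≤ k → x k = 0 := by
    intro j
    induction j using Fin.reverseInduction with
    | last =>
      intro k hk
      have hkl : k = Fin.last n := le_antisymm (Fin.le_last k) hk
      subst hkl
      have : v (Fin.last n) = A (Fin.last n) (Fin.last n) * x (Fin.last n) := by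
        rw [← hx]
        simp only [Matrix.mulVec, dotProduct]
        refine Finset.sum_eq_single_of_mem _ (Finset.mem_univ _) ?_
        intro k _ hk
        have hk' : (k : ℕ) < n := lt_of_le_of_ne (Nat.lt_succ_iff.mp k.isLt)
          (fun h => hk (Fin.ext h))
        rw [htri _ _ hk', zero_mul]
      rw [hvlast, hlast, one_mul] at this
      exact this.symm
    | cast j ih =>
      intro k hk
      rcases eq_or_lt_of_le hk with rfl | hlt
      · -- k = j.castSucc
        have hsum : v j.castSucc = A j.castSucc j.castSucc * x j.castSucc := by
          rw [← hx]
          simp only [Matrix.mulVec, dotProduct]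
          refine Finset.sum_eq_single_of_mem _ (Finset.mem_univ _) ?_
          intro k' _ hk'
          rcases lt_or_gt_of_ne (fun h : (k' : ℕ) = (j.castSucc : ℕ) => hk' (Fin.ext h)) with h | h
          · rw [htri _ _ h, zero_mul]
          · have hx0 : x k' = 0 := by
              refine ih k' ?_
              simp only [Fin.lt_def, Fin.coe_castSucc] at h
              simp only [Fin.le_def, Fin.val_succ]
              omega
            rw [hx0, mul_zero]
        rw [hdiag] at hsum
        rcases hv01 j.castSucc with h0 | h1
        · have : ((p : ℤ) ^ e j) * x j.castSucc = 0 := by rw [← hsum, h0]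
          have hpne : ((p : ℤ) ^ e j) ≠ 0 := by positivity
          exact (mul_eq_zero.mp this).resolve_left hpne
        · exfalso
          have hdvd : (p : ℤ) ^ e j ∣ 1 := ⟨x j.castSucc, by rw [← hsum, h1]⟩
          have h1' := Int.le_of_dvd one_pos hdvd
          have : (2 : ℤ) ≤ (p : ℤ) ^ e j := by
            calc (2 : ℤ) ≤ (p : ℤ) := by exact_mod_cast hp
            _ = (p : ℤ) ^ 1 := (pow_one _).symm
            _ ≤ (p : ℤ) ^ e j := pow_le_pow_right₀ (by exact_mod_cast le_trans one_le_two hp) (he j)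
          omega
      · refine ih k ?_
        simp only [Fin.lt_def, Fin.coe_castSucc] at hlt
        simp only [Fin.le_def, Fin.val_succ]
        omega
  have hx0 : x = 0 := funext fun k => key 0 k (Fin.zero_le k)
  rw [← hx, hx0]
  simp

theorem pow_lift (p : ℕ) (hp : p.Prime) (m : ℕ) (a : ℤ) (ha : ¬ (p : ℤ) ∣ a) :
    ((p : ℤ) ^ (m + 1)) ∣ a ^ (p ^ m * (p - 1)) - 1 := by
  induction m with
  | zero =>
    simp only [pow_zero, one_mul, zero_add, pow_one]
    haveI : Fact p.Prime := ⟨hp⟩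
    have h0 : (a : ZMod p) ≠ 0 := by
      rwa [Ne, ZMod.intCast_zmod_eq_zero_iff_dvd]
    have := ZMod.pow_card_sub_one_eq_one h0
    have h2 : ((a ^ (p - 1) - 1 : ℤ) : ZMod p) = 0 := by push_cast [this]; ring
    exact_mod_cast (ZMod.intCast_zmod_eq_zero_iff_dvd _ _).mp h2
  | succ m ih =>
    set b := a ^ (p ^ m * (p - 1)) with hb
    have hbp : a ^ (p ^ (m + 1) * (p - 1)) = b ^ p := by
      rw [hb, ← pow_mul]; ring_nf
    rw [hbp]
    have hfac : b ^ p - 1 = (Finset.range p).sum (fun i => b ^ i) * (b - 1) := by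
      rw [geom_sum_mul]
    rw [hfac]
    have h1 : (p : ℤ) ∣ (Finset.range p).sum (fun i => b ^ i) := by
      have hb1 : (p : ℤ) ∣ b - 1 := by
        have : ((p : ℤ) ^ (m + 1)) ∣ b - 1 := ih
        exact dvd_trans (dvd_pow_self _ (Nat.succ_ne_zero m)) this
      have : (p : ℤ) ∣ (Finset.range p).sum (fun i => b ^ i) - p := by
        have : (Finset.range p).sum (fun i => b ^ i) - (p : ℤ) =
            (Finset.range p).sum (fun i => b ^ i - 1) := by
          rw [Finset.sum_sub_distrib]
          simp
        rw [this]
        exact Finset.dvd_sum fun i _ => dvd_trans hb1 ⟨_, by rw [mul_comm, geom_sum_mul]⟩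
      have := dvd_add this (dvd_refl (p : ℤ))
      simpa using this
    calc ((p:ℤ) ^ (m + 1 + 1)) = (p : ℤ) * (p : ℤ) ^ (m + 1) := by ring
    _ ∣ (Finset.range p).sum (fun i => b ^ i) * (b - 1) := mul_dvd_mul h1 ih

theorem det_smul_mem {n : ℕ} (A : Matrix (Fin n) (Fin n) ℤ) (w : Fin n → ℤ) :
    A.det • w ∈ colSpan A := by
  rw [mem_colSpan_iff]
  refine ⟨A.adjugate.mulVec w, ?_⟩
  rw [Matrix.mulVec_mulVec, Matrix.mul_adjugate, Matrix.smul_mulVec, Matrix.one_mulVec]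

theorem pow_mem_subring {n : ℕ} {R : AddSubgroup (Fin n → ℤ)}
    (hmul : ∀ u v : Fin n → ℤ, u ∈ R → v ∈ R → u * v ∈ R)
    {w : Fin n → ℤ} (hw : w ∈ R) : ∀ k : ℕ, w ^ (k + 1) ∈ R := by
  intro k
  induction k with
  | zero => simpa using hw
  | succ k ih => rw [pow_succ]; exact hmul _ _ ih hw

theorem irred {n p : ℕ} (hp : p.Prime)
    {A : Matrix (Fin (n + 1)) (Fin (n + 1)) ℤ}
    (htri : ∀ i j : Fin (n + 1), (j : ℕ) < (i : ℕ) → A i j = 0)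
    (hones : (fun _ => (1 : ℤ)) ∈ colSpan A)
    (hmul : ∀ u v : Fin (n + 1) → ℤ, u ∈ colSpan A → v ∈ colSpan A → u * v ∈ colSpan A)
    {m : ℕ} (hdet : A.det = (p : ℤ) ^ m)
    (e : Fin n → ℕ) (he : ∀ i, 1 ≤ e i)
    (hdiag : ∀ i : Fin n, A i.castSucc i.castSucc = (p : ℤ) ^ e i)
    (hlast : A (Fin.last n) (Fin.last n) = 1)
    (v : Fin (n + 1) → ℤ) (hv : v ∈ colSpan A) (i : Fin (n + 1)) :
    (p : ℤ) ∣ v i - v (Fin.last n) := by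
  set R := colSpan A with hR
  -- w := v - v(last) • ones
  set w : Fin (n + 1) → ℤ := v - (v (Fin.last n)) • (fun _ => (1 : ℤ)) with hwdef
  have hwR : w ∈ R := AddSubgroup.sub_mem _ hv (AddSubgroup.zsmul_mem _ hones _)
  have hwi : ∀ k, w k = v k - v (Fin.last n) := by
    intro k; simp [hwdef]
  have hwlast : w (Fin.last n) = 0 := by rw [hwi]; ring
  rw [← hwi]
  by_contra hnd
  -- N = p^m * (p-1)
  set N := p ^ m * (p - 1) with hN
  have hp2 : 2 ≤ p := hp.two_le
  have hN1 : 1 ≤ N := Nat.one_le_iff_ne_zero.mpr (by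
    simp [hN, Nat.mul_eq_zero, pow_eq_zero_iff]
    omega)
  have hy : w ^ N ∈ R := by
    have := pow_mem_subring hmul hwR (N - 1)
    rwa [Nat.sub_add_cancel hN1] at this
  set y := w ^ N with hydef
  have hyk : ∀ k, y k = (w k) ^ N := fun k => by simp [hydef]
  set u : Fin (n + 1) → ℤ := fun k => if (p : ℤ) ∣ w k then 0 else 1 with hudef
  have hmN : m + 1 ≤ N := by
    have : m < p ^ m := Nat.lt_pow_self hp.one_lt
    calc m + 1 ≤ p ^ m := this
    _ = p ^ m * 1 := (mul_one _).symm
    _ ≤ N := Nat.mul_le_mul_left _ (by omega)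
  have hdiv : ∀ k, ((p : ℤ) ^ (m + 1)) ∣ y k - u k := by
    intro k
    by_cases h : (p : ℤ) ∣ w k
    · simp only [hudef, if_pos h, sub_zero, hyk]
      obtain ⟨c, hc⟩ := h
      rw [hc, mul_pow]
      exact Dvd.dvd.mul_right (pow_dvd_pow _ hmN) _
    · simp only [hudef, if_neg h]
      rw [hyk]
      exact pow_lift p hp m (w k) h
  -- u ∈ R
  have huR : u ∈ R := by
    have hz : (fun k => y k - u k) = A.det • (fun k => (y k - u k) / (p : ℤ) ^ m) := by
      ext k
      have hd : ((p : ℤ) ^ m) ∣ y k - u k :=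
        dvd_trans (pow_dvd_pow _ (Nat.le_succ m)) (hdiv k)
      simp only [Pi.smul_apply, hdet, smul_eq_mul]
      exact (Int.mul_ediv_cancel' hd).symm
    have hzR : (fun k => y k - u k) ∈ R := by
      rw [hz]; exact det_smul_mem A _
    have : u = y - (fun k => y k - u k) := by ext k; simp
    rw [this]
    exact AddSubgroup.sub_mem _ hy hzR
  -- apply indicator_zero
  obtain ⟨x, hx⟩ := (mem_colSpan_iff A u).mp huR
  have hu0 : u = 0 := by
    refine indicator_zero A htri p hp2 e he hdiag hlast x u hx ?_ ?_
    · intro k; by_cases h : (p : ℤ) ∣ w k <;> simp [hudef, h]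
    · simp [hudef, hwlast]
  have : u i = 1 := by simp [hudef, hnd]
  rw [hu0] at this
  simp at this

theorem genle {n : ℕ} (R : AddSubgroup (Fin (n + 1) → ℤ))
    (hones : (fun _ => (1 : ℤ)) ∈ R) :
    ∃ S : Finset ((Fin (n + 1) → ℤ) ⧸ R), S.card ≤ n ∧
      AddSubgroup.closure (S : Set ((Fin (n + 1) → ℤ) ⧸ R)) = ⊤ := by
  classical
  set mk := QuotientAddGroup.mk' R with hmk
  refine ⟨Finset.image (fun i : Fin n => mk (Pi.single i.castSucc 1)) Finset.univ,
    le_trans Finset.card_image_le (by simp), ?_⟩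
  set S := Finset.image (fun i : Fin n => mk (Pi.single i.castSucc 1)) Finset.univ with hS
  set H := AddSubgroup.closure (S : Set ((Fin (n + 1) → ℤ) ⧸ R)) with hH
  have hmem : ∀ i : Fin n, mk (Pi.single i.castSucc 1) ∈ H :=
    fun i => AddSubgroup.subset_closure (by simp [hS])
  have hsingle : ∀ i : Fin (n + 1), mk (Pi.single i 1) ∈ H := by
    intro i
    induction i using Fin.lastCases with
    | cast j => exact hmem j
    | last =>
      have hones' : mk (fun _ => (1 : ℤ)) = 0 := (QuotientAddGroup.eq_zero_iff _).mpr hones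
      have hsum : (fun _ => (1 : ℤ)) = Finset.univ.sum (fun i : Fin (n + 1) => Pi.single i (1 : ℤ)) := by
        ext k; rw [Finset.univ_sum_single]
      have : (0 : (Fin (n + 1) → ℤ) ⧸ R) =
          Finset.univ.sum (fun i : Fin n => mk (Pi.single i.castSucc 1)) + mk (Pi.single (Fin.last n) 1) := by
        rw [← hones', hsum, map_sum, Fin.sum_univ_castSucc]
      have h2 : mk (Pi.single (Fin.last n) 1) =
          - Finset.univ.sum (fun i : Fin n => mk (Pi.single i.castSucc 1)) := by
        exact eq_neg_of_add_eq_zero_right this.symm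
      rw [h2]
      exact AddSubgroup.neg_mem _ (AddSubgroup.sum_mem _ fun i _ => hmem i)
  rw [eq_top_iff]
  rintro q -
  induction q using QuotientAddGroup.induction_on with
  | H x =>
    have hss : ∀ i, x i • Pi.single i (1 : ℤ) = (Pi.single i (x i) : Fin (n + 1) → ℤ) :=
      fun i => by ext k; by_cases h : k = i <;> simp [Pi.single_apply, h]
    have hx : x = Finset.univ.sum (fun i => x i • Pi.single i (1 : ℤ)) := by
      simp_rw [hss]
      exact (Finset.univ_sum_single x).symm
    have h3 : mk (Finset.univ.sum (fun i => x i • Pi.single i (1 : ℤ))) ∈ H := by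
      rw [map_sum]
      refine AddSubgroup.sum_mem _ fun i _ => ?_
      rw [map_zsmul]
      exact AddSubgroup.zsmul_mem _ (hsingle i) _
    rw [← hx] at h3
    exact h3

theorem rankge {n p : ℕ} (hp : p.Prime) (R : AddSubgroup (Fin (n + 1) → ℤ))
    (hcong : ∀ v ∈ R, ∀ i, (p : ℤ) ∣ v i - v (Fin.last n)) :
    ∀ S : Finset ((Fin (n + 1) → ℤ) ⧸ R),
      AddSubgroup.closure (S : Set ((Fin (n + 1) → ℤ) ⧸ R)) = ⊤ → n ≤ S.card := by
  classical
  haveI : Fact p.Prime := ⟨hp⟩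
  -- the additive hom to (ZMod p)^n
  set φ0 : (Fin (n + 1) → ℤ) →+ (Fin n → ZMod p) :=
    AddMonoidHom.mk' (fun x => fun i => ((x i.castSucc - x (Fin.last n) : ℤ) : ZMod p))
      (by intro a b; ext i; simp only [Pi.add_apply]; push_cast; ring) with hφ0
  have hker : R ≤ φ0.ker := by
    intro v hv
    rw [AddMonoidHom.mem_ker]
    ext i
    simp only [hφ0, AddMonoidHom.mk'_apply, Pi.zero_apply]
    rw [ZMod.intCast_zmod_eq_zero_iff_dvd]
    exact_mod_cast hcong v hv i.castSucc
  set φ : ((Fin (n + 1) → ℤ) ⧸ R) →+ (Fin n → ZMod p) :=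
    QuotientAddGroup.lift R φ0 hker with hφ
  have hsurj : Function.Surjective φ := by
    intro f
    refine ⟨QuotientAddGroup.mk (fun k => Fin.lastCases 0 (fun j => ((f j).val : ℤ)) k), ?_⟩
    ext i
    simp only [hφ, hφ0, QuotientAddGroup.lift_mk, AddMonoidHom.mk'_apply]
    rw [Fin.lastCases_castSucc, Fin.lastCases_last]
    simp [ZMod.natCast_val, ZMod.cast_id]
  intro S hS
  set T := Finset.image φ S with hT
  have hTtop : AddSubgroup.closure (T : Set (Fin n → ZMod p)) = ⊤ := by
    have := AddMonoidHom.map_closure φ (S : Set ((Fin (n + 1) → ℤ) ⧸ R))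
    rw [hS] at this
    rw [hT, Finset.coe_image, ← this]
    rw [eq_top_iff]
    intro y _
    obtain ⟨x, rfl⟩ := hsurj y
    exact ⟨x, trivial, rfl⟩
  have hspan : Submodule.span (ZMod p) (T : Set (Fin n → ZMod p)) = ⊤ := by
    rw [eq_top_iff]
    intro y _
    have hy : y ∈ AddSubgroup.closure (T : Set (Fin n → ZMod p)) := by rw [hTtop]; trivial
    refine AddSubgroup.closure_induction (p := fun z _ => z ∈ Submodule.span (ZMod p) (T : Set (Fin n → ZMod p))) ?_ ?_ ?_ ?_ hy
    · exact fun z hz => Submodule.subset_span hz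
    · exact Submodule.zero_mem _
    · exact fun a b _ _ ha hb => Submodule.add_mem _ ha hb
    · exact fun a _ ha => Submodule.neg_mem _ ha
  have hrank : n ≤ T.card := by
    have h1 : Module.finrank (ZMod p) (Fin n → ZMod p) ≤ T.card := by
      have := finrank_span_finset_le_card (R := ZMod p) (M := Fin n → ZMod p) T
      rw [Set.finrank, hspan, finrank_top] at this
      exact this
    rwa [Module.finrank_fin_fun] at h1
  exact le_trans hrank Finset.card_image_le

theorem irreducible_subring_corank (n p : ℕ) (hp : p.Prime)
    (A : Matrix (Fin (n + 1)) (Fin (n + 1)) ℤ) (hA : IsSubringMatrix A)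
    (hdetp : ∃ m : ℕ, A.det = (p : ℤ) ^ m)
    (e : Fin n → ℕ) (he : ∀ i, 1 ≤ e i)
    (hdiag : ∀ i : Fin n, A i.castSucc i.castSucc = (p : ℤ) ^ e i)
    (hlast : A (Fin.last n) (Fin.last n) = 1) :
    (∀ r c : Fin 2 → Fin (n + 1), Function.Injective r → Function.Injective c →
      (p : ℤ) ∣ (A.submatrix r c).det) ∧ RankEq (colSpan A) n := by
  obtain ⟨⟨htri, _⟩, hdet0, hones, hmul⟩ := hA
  obtain ⟨m, hdet⟩ := hdetp
  have hcong : ∀ v ∈ colSpan A, ∀ i, (p : ℤ) ∣ v i - v (Fin.last n) :=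
    fun v hv i => irred hp htri hones hmul hdet e he hdiag hlast v hv i
  have hcol : ∀ j : Fin (n + 1), (fun i => A i j) ∈ colSpan A :=
    fun j => AddSubgroup.subset_closure (Set.mem_range_self j)
  constructor
  · intro r c _ _
    have h1 : (p : ℤ) ∣ A (r 0) (c 0) - A (r 1) (c 0) := by
      have ha := hcong _ (hcol (c 0)) (r 0)
      have hb := hcong _ (hcol (c 0)) (r 1)
      have := dvd_sub ha hb
      simpa using this
    have h2 : (p : ℤ) ∣ A (r 0) (c 1) - A (r 1) (c 1) := by
      have ha := hcong _ (hcol (c 1)) (r 0)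
      have hb := hcong _ (hcol (c 1)) (r 1)
      have := dvd_sub ha hb
      simpa using this
    rw [Matrix.det_fin_two]
    simp only [Matrix.submatrix_apply]
    have key : A (r 0) (c 0) * A (r 1) (c 1) - A (r 0) (c 1) * A (r 1) (c 0) =
        (A (r 0) (c 0) - A (r 1) (c 0)) * A (r 1) (c 1) -
          A (r 1) (c 0) * (A (r 0) (c 1) - A (r 1) (c 1)) := by ring
    rw [key]
    exact dvd_sub (Dvd.dvd.mul_right h1 _) (Dvd.dvd.mul_left h2 _)
  · exact ⟨genle (colSpan A) hones, rankge hp (colSpan A) hcong⟩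
end

section
/- Let A be an n×n subring matrix with diagonal (p^{e_1},...,p^{e_{n-1}},1) and I = {i : e_i ≠ 0}. If i ∈ I and j ∉ I, then a_{ij} ∈ {0,1}. -/
lemma exists_mulVec_of_mem_colSpan {n : ℕ} (A : Matrix (Fin n) (Fin n) ℤ)
    {w : Fin n → ℤ} (hw : w ∈ colSpan A) : ∃ x : Fin n → ℤ, A.mulVec x = w := by
  induction hw using AddSubgroup.closure_induction with
  | mem v hv =>
    obtain ⟨j, rfl⟩ := hv
    exact ⟨Pi.single j 1, by simp [Matrix.mulVec_single]; rfl⟩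
  | zero => exact ⟨0, by simp [Matrix.mulVec_zero]⟩
  | add u v _ _ hu hv =>
    obtain ⟨x, hx⟩ := hu; obtain ⟨y, hy⟩ := hv
    exact ⟨x + y, by rw [Matrix.mulVec_add, hx, hy]⟩
  | neg u _ hu =>
    obtain ⟨x, hx⟩ := hu
    exact ⟨-x, by rw [Matrix.mulVec_neg, hx]⟩

/-- If `p^e ∣ c*(c-1)`, `e ≠ 0`, `0 ≤ c < p^e`, then `c = 0 ∨ c = 1`. -/
lemma zero_or_one_of_pow_dvd {p : ℕ} (hp : p.Prime) {e : ℕ} (he : e ≠ 0)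
    {c : ℤ} (h0 : 0 ≤ c) (h1 : c < (p : ℤ) ^ e) (hd : (p : ℤ) ^ e ∣ c * (c - 1)) :
    c = 0 ∨ c = 1 := by
  have hpz : Prime (p : ℤ) := Nat.prime_iff_prime_int.mp hp
  have hp2 : (2 : ℤ) ≤ (p : ℤ) := by exact_mod_cast hp.two_le
  have hpe2 : (2 : ℤ) ≤ (p : ℤ) ^ e := le_trans hp2 (le_self_pow₀ (by linarith) he)
  have hco : IsCoprime c (c - 1) := ⟨1, -1, by ring⟩
  have hpd : (p : ℤ) ∣ c * (c - 1) := (dvd_pow_self (p : ℤ) he).trans hd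
  rcases hpz.dvd_mul.mp hpd with hc | hc
  · left
    have hcop : IsCoprime ((p : ℤ) ^ e) (c - 1) :=
      (hco.of_isCoprime_of_dvd_left hc).pow_left
    have hdc : (p : ℤ) ^ e ∣ c := hcop.dvd_of_dvd_mul_right hd
    rcases eq_or_lt_of_le h0 with h | h
    · exact h.symm
    · exact absurd h1 (not_lt.mpr (Int.le_of_dvd h hdc))
  · right
    have hcop : IsCoprime ((p : ℤ) ^ e) c :=
      ((hco.symm).of_isCoprime_of_dvd_left hc).pow_left
    have hdc : (p : ℤ) ^ e ∣ c - 1 :=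
      hcop.dvd_of_dvd_mul_right (by rwa [mul_comm] at hd)
    rcases lt_trichotomy (c - 1) 0 with h | h | h
    · have hc0 : c = 0 := by omega
      rw [hc0] at hdc
      have h1' : (p : ℤ) ^ e ≤ 1 := by
        have := Int.le_of_dvd (by norm_num) ((dvd_neg).mpr hdc)
        simpa using this
      omega
    · omega
    · exact absurd (Int.le_of_dvd h hdc) (by omega)

theorem entry_zero_or_one (n p : ℕ) (hp : p.Prime)
    (A : Matrix (Fin (n + 1)) (Fin (n + 1)) ℤ) (hA : IsSubringMatrix A)
    (e : Fin n → ℕ)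
    (hdiag : ∀ i : Fin n, A i.castSucc i.castSucc = (p : ℤ) ^ e i)
    (hlast : A (Fin.last n) (Fin.last n) = 1)
    (i : Fin n) (hi : e i ≠ 0)
    (j : Fin (n + 1)) (hj : ∀ t : Fin n, j = t.castSucc → e t = 0) :
    A i.castSucc j = 0 ∨ A i.castSucc j = 1 := by
  obtain ⟨⟨hlow, hup⟩, _, h1, hmul⟩ := hA
  have hppos : (0 : ℤ) < (p : ℤ) := by exact_mod_cast hp.pos
  -- the j-th column
  set v : Fin (n + 1) → ℤ := fun k => A k j with hv
  have hvmem : v ∈ colSpan A := AddSubgroup.subset_closure ⟨j, rfl⟩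
  have hwmem : v * v - v ∈ colSpan A := sub_mem (hmul v v hvmem hvmem) hvmem
  obtain ⟨x, hx⟩ := exists_mulVec_of_mem_colSpan A hwmem
  -- diagonal entries are positive
  have hdpos : ∀ k : Fin (n + 1), 0 < A k k := by
    intro k
    induction k using Fin.lastCases with
    | last => rw [hlast]; norm_num
    | cast t => rw [hdiag t]; positivity
  -- v j = 1
  have hvj : v j = 1 := by
    induction j using Fin.lastCases with
    | last => show A _ _ = 1; exact hlast
    | cast t => show A _ _ = 1; rw [hdiag t, hj t rfl, pow_zero]
  -- the row equation, given vanishing of later x's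
  have hrow : ∀ k : Fin (n + 1), (∀ m : Fin (n + 1), (k : ℕ) < (m : ℕ) → x m = 0) →
      A k k * x k = v k * v k - v k := by
    intro k hk
    have hcomp : A.mulVec x k = A k k * x k := by
      rw [Matrix.mulVec, dotProduct]
      refine Finset.sum_eq_single k (fun m _ hm => ?_) (by simp)
      rcases lt_or_gt_of_ne (fun h : (m : ℕ) = (k : ℕ) => hm (Fin.ext h)) with h | h
      · rw [hlow k m h, zero_mul]
      · rw [hk m h, mul_zero]
    rw [← hcomp, hx]
    simp
  -- key: column entries are 0 or 1 (and x k = 0) provided later x's vanish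
  have key : ∀ k : Fin (n + 1), (∀ m : Fin (n + 1), (k : ℕ) < (m : ℕ) → x m = 0) →
      (v k = 0 ∨ v k = 1) ∧ x k = 0 := by
    intro k hk
    have hr := hrow k hk
    have hvk : v k = 0 ∨ v k = 1 := by
      rcases lt_trichotomy ((j : ℕ)) ((k : ℕ)) with h | h | h
      · exact Or.inl (hlow k j h)
      · right; rw [show k = j from Fin.ext h.symm]; exact hvj
      · -- k < j, so k is not the last index
        have hklt : (k : ℕ) < n := lt_of_lt_of_le h (Nat.lt_succ_iff.mp j.isLt)
        obtain ⟨t, rfl⟩ : ∃ t : Fin n, k = t.castSucc := ⟨⟨k, hklt⟩, Fin.ext rfl⟩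
        obtain ⟨hge, hlt⟩ := hup t.castSucc j h
        rw [hdiag t] at hr hlt
        have hva : v t.castSucc = A t.castSucc j := rfl
        rw [hva] at hr ⊢
        by_cases het : e t = 0
        · left
          rw [het, pow_zero] at hlt
          omega
        · exact zero_or_one_of_pow_dvd hp het hge hlt
            ⟨x t.castSucc, by linear_combination -hr⟩
    refine ⟨hvk, ?_⟩
    have hz : v k * v k - v k = 0 := by rcases hvk with h | h <;> rw [h] <;> ring
    rw [hz] at hr
    exact (mul_eq_zero.mp hr).resolve_left (ne_of_gt (hdpos k))
  -- all x's vanish, by downward induction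
  have hxzero : ∀ d : ℕ, ∀ k : Fin (n + 1), n - (k : ℕ) < d → x k = 0 := by
    intro d
    induction d with
    | zero => intro k hk; omega
    | succ d ih =>
      intro k hk
      refine (key k fun m hm => ih m ?_).2
      have := m.isLt
      omega
  have hxall : ∀ m : Fin (n + 1), x m = 0 := fun m => hxzero (n + 1) m (by omega)
  exact (key i.castSucc fun m hm => hxall m).1
end
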